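/- Let β_1, …, β_m be nonnegative integers with mean β̄ = (1/m)∑_{r=1}^m β_r, and let θ = ⌊β̄⌋ and f = β̄ − θ. Then for every convex function ψ : ℝ → ℝ, ∑_{r=1}^m ψ(β_r) ≥ m(1 − f)ψ(θ) + m f ψ(θ + 1). -/

import Mathlib

open Finset

/-- Lemma 3: for nonnegative integers β_1, …, β_m with mean β̄, integral part
θ = ⌊β̄⌋ and fractional part f = β̄ − θ, every convex function ψ satisfies
∑_{r=1}^m ψ(β_r) ≥ m(1 − f)ψ(θ) + m f ψ(θ + 1). -/
theorem separable_convex_lower_bound (m : ℕ) (hm : 1 ≤ m) (β : Fin m → ℕ)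
    (βbar : ℝ) (hβbar : βbar = (∑ r, (β r : ℝ)) / m)
    (θ : ℕ) (hθ : θ = ⌊βbar⌋₊)
    (f : ℝ) (hf : f = βbar - θ)
    (ψ : ℝ → ℝ) (hψ : ConvexOn ℝ Set.univ ψ) :
    (m : ℝ) * (1 - f) * ψ θ + (m : ℝ) * f * ψ (θ + 1) ≤ ∑ r, ψ (β r) := by
  have hm0 : (m : ℝ) ≠ 0 := by positivity
  set s : ℝ := ψ (θ + 1) - ψ θ with hs
  have key : ∀ n : ℕ, ψ θ + s * ((n : ℝ) - θ) ≤ ψ n := by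
    intro n
    rcases le_or_gt n θ with hn | hn
    · rcases eq_or_lt_of_le hn with rfl | hn
      · simp
      · have hn' : (n : ℝ) < θ := by exact_mod_cast hn
        have := hψ.secant_mono (a := (θ : ℝ)) (x := (n : ℝ)) (y := (θ : ℝ) + 1)
          trivial trivial trivial (by linarith) (by linarith) (by linarith)
        rw [div_le_iff_of_neg (by linarith)] at this
        simp only [add_sub_cancel_left, div_one, ← hs] at this
        linarith
    · have hn1 : θ + 1 ≤ n := hn
      rcases eq_or_lt_of_le hn1 with heq | hn1
      · subst heq; push_cast; ring_nf; simp; rw [add_comm (1:ℝ)]; linarith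
      · have hn' : (θ : ℝ) + 1 < n := by exact_mod_cast hn1
        have := hψ.secant_mono (a := (θ : ℝ)) (x := (θ : ℝ) + 1) (y := (n : ℝ))
          trivial trivial trivial (by linarith) (by linarith) (by linarith)
        rw [le_div_iff₀ (by linarith)] at this
        simp only [add_sub_cancel_left, div_one, ← hs] at this
        linarith
  have hsum : ∑ r, (ψ θ + s * ((β r : ℝ) - θ)) ≤ ∑ r, ψ (β r) :=
    Finset.sum_le_sum fun r _ => key (β r)
  have hβ : (∑ r, (β r : ℝ)) = (m : ℝ) * βbar := by
    rw [hβbar]; field_simp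
  have hlhs : ∑ r, (ψ θ + s * ((β r : ℝ) - θ))
      = (m : ℝ) * ψ θ + s * ((m : ℝ) * βbar - (m : ℝ) * θ) := by
    rw [Finset.sum_add_distrib, ← Finset.mul_sum, Finset.sum_const, Finset.card_univ,
      Fintype.card_fin, nsmul_eq_mul, Finset.sum_sub_distrib, Finset.sum_const,
      Finset.card_univ, Fintype.card_fin, nsmul_eq_mul, hβ]
  rw [hlhs] at hsum
  have : βbar = θ + f := by rw [hf]; ring
  rw [this] at hsum
  calc (m : ℝ) * (1 - f) * ψ θ + (m : ℝ) * f * ψ (θ + 1)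
      = (m : ℝ) * ψ θ + s * ((m : ℝ) * ((θ : ℝ) + f) - (m : ℝ) * θ) := by rw [hs]; ring
    _ ≤ ∑ r, ψ (β r) := hsum
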